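/- Let z_1,...,z_n be independent Bernoulli random variables with parameters q_1,...,q_n, λ = Σ q_i ≥ 1, and ℓ a positive integer. Then min(λ, ℓ) - E[min(Σ z_i, ℓ)] ≤ (3/√λ) · min(λ, ℓ). -/
import Mathlib


open Finset Real

/-- Probability of the outcome `z` of `n` independent Bernoulli random variables with
parameters `q i`. -/
noncomputable def berWeight {n : ℕ} (q : Fin n → ℝ) (z : Fin n → Bool) : ℝ :=
  ∏ i, if z i then q i else 1 - q i

/-- Number of successes in outcome `z`. -/
def count {n : ℕ} (z : Fin n → Bool) : ℕ := ∑ i, if z i then 1 else 0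

/-- `Hber q ℓ = E[min(Σᵢ zᵢ, ℓ)]` for independent `zᵢ ~ Ber(q i)`. -/
noncomputable def Hber {n : ℕ} (q : Fin n → ℝ) (ℓ : ℕ) : ℝ :=
  ∑ z : Fin n → Bool, berWeight q z * min ((count z : ℝ)) (ℓ : ℝ)

/-- `Ptail q m = P[Σᵢ zᵢ ≥ m]` for independent `zᵢ ~ Ber(q i)`. -/
noncomputable def Ptail {n : ℕ} (q : Fin n → ℝ) (m : ℕ) : ℝ :=
  ∑ z ∈ Finset.univ.filter (fun z : Fin n → Bool => m ≤ count z), berWeight q z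

lemma sum_prod_bool {n : ℕ} (g : Fin n → Bool → ℝ) :
    ∑ z : Fin n → Bool, ∏ i, g i (z i) = ∏ i, (g i true + g i false) := by
  rw [← Fintype.prod_sum fun i b => g i b]
  simp

lemma expect_prod {n : ℕ} (q : Fin n → ℝ) (S : Finset (Fin n)) :
    ∑ z : Fin n → Bool, berWeight q z * ∏ i ∈ S, (if z i then (1:ℝ) else 0)
      = ∏ i ∈ S, q i := by
  have h1 : ∀ z : Fin n → Bool, berWeight q z * ∏ i ∈ S, (if z i then (1:ℝ) else 0)
      = ∏ i, ((if z i then q i else 1 - q i) *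
          (if i ∈ S then (if z i then (1:ℝ) else 0) else 1)) := by
    intro z
    rw [Finset.prod_mul_distrib]
    congr 1
    rw [Finset.prod_ite_mem, Finset.univ_inter]
  simp_rw [h1]
  rw [sum_prod_bool (fun i b => (if b then q i else 1 - q i) * (if i ∈ S then (if b then (1:ℝ) else 0) else 1))]
  have h2 : ∀ i, ((if (true:Bool) then q i else 1 - q i) *
          (if i ∈ S then (if (true:Bool) then (1:ℝ) else 0) else 1)
        + (if (false:Bool) then q i else 1 - q i) *
          (if i ∈ S then (if (false:Bool) then (1:ℝ) else 0) else 1))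
      = if i ∈ S then q i else 1 := by
    intro i; by_cases h : i ∈ S <;> simp [h]
  rw [Finset.prod_congr rfl (fun i _ => h2 i)]
  rw [Finset.prod_ite_mem, Finset.univ_inter]

lemma expect_one {n : ℕ} (q : Fin n → ℝ) : ∑ z : Fin n → Bool, berWeight q z = 1 := by
  have := expect_prod q ∅
  simpa using this

lemma count_cast {n : ℕ} (z : Fin n → Bool) :
    (count z : ℝ) = ∑ i, (if z i then (1:ℝ) else 0) := by
  simp [count]

lemma expect_ind {n : ℕ} (q : Fin n → ℝ) (i : Fin n) :
    ∑ z : Fin n → Bool, berWeight q z * (if z i then (1:ℝ) else 0) = q i := by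
  have := expect_prod q {i}
  simpa using this

lemma expect_count {n : ℕ} (q : Fin n → ℝ) :
    ∑ z : Fin n → Bool, berWeight q z * (count z : ℝ) = ∑ i, q i := by
  simp_rw [count_cast, Finset.mul_sum]
  rw [Finset.sum_comm]
  exact Finset.sum_congr rfl fun i _ => expect_ind q i

lemma expect_ind_pair {n : ℕ} (q : Fin n → ℝ) (i j : Fin n) :
    ∑ z : Fin n → Bool, berWeight q z * ((if z i then (1:ℝ) else 0) * (if z j then (1:ℝ) else 0))
      = if i = j then q i else q i * q j := by
  by_cases h : i = j
  · subst h
    simp only [if_pos rfl]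
    have h1 : ∀ z : Fin n → Bool, (if z i then (1:ℝ) else 0) * (if z i then (1:ℝ) else 0)
        = (if z i then (1:ℝ) else 0) := by intro z; by_cases hz : z i <;> simp [hz]
    simp_rw [h1]
    exact expect_ind q i
  · have := expect_prod q {i, j}
    simp only [Finset.prod_pair h] at this
    simpa [h] using this

lemma expect_count_sq {n : ℕ} (q : Fin n → ℝ) :
    ∑ z : Fin n → Bool, berWeight q z * (count z : ℝ)^2
      = (∑ i, q i)^2 + ∑ i, (q i - q i^2) := by
  have h1 : ∀ z : Fin n → Bool, (count z : ℝ)^2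
      = ∑ i, ∑ j, (if z i then (1:ℝ) else 0) * (if z j then (1:ℝ) else 0) := by
    intro z
    rw [count_cast, sq, Finset.sum_mul_sum]
  simp_rw [h1, Finset.mul_sum]
  rw [Finset.sum_comm]
  have h2 : ∀ i ∈ Finset.univ, ∑ z : Fin n → Bool, ∑ j, berWeight q z *
      ((if z i then (1:ℝ) else 0) * (if z j then (1:ℝ) else 0))
      = ∑ j, (if i = j then q i else q i * q j) := by
    intro i _
    rw [Finset.sum_comm]
    exact Finset.sum_congr rfl fun j _ => expect_ind_pair q i j
  rw [Finset.sum_congr rfl h2]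
  have h3 : ∀ i : Fin n, ∑ j, (if i = j then q i else q i * q j)
      = q i * (∑ j, q j) + (q i - q i^2) := by
    intro i
    have : ∑ j, (if i = j then q i else q i * q j)
        = ∑ j, (q i * q j + (if i = j then q i - q i * q j else 0)) := by
      refine Finset.sum_congr rfl fun j _ => ?_
      by_cases h : i = j
      · subst h; simp
      · simp [h]
    rw [this, Finset.sum_add_distrib, Finset.sum_ite_eq Finset.univ i (fun j => q i - q i * q j)]
    simp [Finset.mul_sum, sq]
  rw [Finset.sum_congr rfl (fun i _ => h3 i), Finset.sum_add_distrib, sq, Finset.sum_mul]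

lemma expect_var {n : ℕ} (q : Fin n → ℝ) (lam : ℝ) (hlam : lam = ∑ i, q i) :
    ∑ z : Fin n → Bool, berWeight q z * ((count z : ℝ) - lam)^2 = ∑ i, (q i - q i^2) := by
  have h1 : ∀ z : Fin n → Bool, berWeight q z * ((count z : ℝ) - lam)^2
      = berWeight q z * (count z : ℝ)^2 - 2 * lam * (berWeight q z * (count z : ℝ))
        + lam^2 * berWeight q z := by intro z; ring
  simp_rw [h1]
  rw [Finset.sum_add_distrib, Finset.sum_sub_distrib, ← Finset.mul_sum, ← Finset.mul_sum,
    expect_count_sq, expect_count, expect_one, ← hlam]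
  ring

lemma berWeight_nonneg {n : ℕ} (q : Fin n → ℝ) (hq : ∀ i, q i ∈ Set.Icc (0:ℝ) 1)
    (z : Fin n → Bool) : 0 ≤ berWeight q z := by
  apply Finset.prod_nonneg
  intro i _
  by_cases hz : z i <;> simp [hz]
  · exact (hq i).1
  · linarith [(hq i).2]

lemma expect_abs_le {n : ℕ} (q : Fin n → ℝ) (hq : ∀ i, q i ∈ Set.Icc (0:ℝ) 1)
    (lam : ℝ) (hlam : lam = ∑ i, q i) (hlam0 : 0 ≤ lam) :
    ∑ z : Fin n → Bool, berWeight q z * |(count z : ℝ) - lam| ≤ Real.sqrt lam := by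
  set A := ∑ z : Fin n → Bool, berWeight q z * |(count z : ℝ) - lam| with hA
  have hA0 : 0 ≤ A := Finset.sum_nonneg fun z _ =>
    mul_nonneg (berWeight_nonneg q hq z) (abs_nonneg _)
  have hvar : ∑ z : Fin n → Bool, berWeight q z * ((count z : ℝ) - lam)^2 ≤ lam := by
    rw [expect_var q lam hlam, hlam]
    apply Finset.sum_le_sum
    intro i _
    nlinarith [(hq i).1, (hq i).2]
  have hcs := Finset.sum_mul_sq_le_sq_mul_sq Finset.univ
    (fun z : Fin n → Bool => Real.sqrt (berWeight q z))
    (fun z : Fin n → Bool => Real.sqrt (berWeight q z) * |(count z : ℝ) - lam|)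
  have e1 : ∀ z : Fin n → Bool, Real.sqrt (berWeight q z) *
      (Real.sqrt (berWeight q z) * |(count z : ℝ) - lam|)
      = berWeight q z * |(count z : ℝ) - lam| := by
    intro z
    rw [← mul_assoc, Real.mul_self_sqrt (berWeight_nonneg q hq z)]
  have e2 : ∀ z : Fin n → Bool, Real.sqrt (berWeight q z) ^ 2 = berWeight q z :=
    fun z => Real.sq_sqrt (berWeight_nonneg q hq z)
  have e3 : ∀ z : Fin n → Bool, (Real.sqrt (berWeight q z) * |(count z : ℝ) - lam|) ^ 2
      = berWeight q z * ((count z : ℝ) - lam)^2 := by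
    intro z
    rw [mul_pow, Real.sq_sqrt (berWeight_nonneg q hq z), sq_abs]
  simp only [e1, e2, e3] at hcs
  rw [expect_one] at hcs
  have hA2 : A^2 ≤ lam := by
    calc A^2 ≤ 1 * ∑ z : Fin n → Bool, berWeight q z * ((count z : ℝ) - lam)^2 := hcs
    _ ≤ lam := by rw [one_mul]; exact hvar
  rw [show A = Real.sqrt (A^2) from (Real.sqrt_sq hA0).symm]
  exact Real.sqrt_le_sqrt hA2

lemma expect_var_le {n : ℕ} (q : Fin n → ℝ) (hq : ∀ i, q i ∈ Set.Icc (0:ℝ) 1)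
    (lam : ℝ) (hlam : lam = ∑ i, q i) :
    ∑ z : Fin n → Bool, berWeight q z * ((count z : ℝ) - lam)^2 ≤ lam := by
  rw [expect_var q lam hlam, hlam]
  apply Finset.sum_le_sum
  intro i _
  nlinarith [(hq i).1, (hq i).2]

/-- For independent `z_i ~ Ber(q_i)` with `λ = Σ q_i ≥ 1` and a positive integer `ℓ`,
`min(λ, ℓ) - E[min(Σ z_i, ℓ)] ≤ (3/√λ) · min(λ, ℓ)`. -/
theorem hcher_sub_hber_sqrt_lam (n : ℕ) (q : Fin n → ℝ) (hq : ∀ i, q i ∈ Set.Icc (0 : ℝ) 1)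
    (lam : ℝ) (hlam : lam = ∑ i, q i) (hlam1 : 1 ≤ lam) (ℓ : ℕ) (hℓ : 1 ≤ ℓ) :
    min lam (ℓ : ℝ) - Hber q ℓ ≤ 3 / Real.sqrt lam * min lam (ℓ : ℝ) := by
  have hw := berWeight_nonneg q hq
  have h1 := expect_one q
  have hlam0 : (0:ℝ) ≤ lam := by linarith
  set s := Real.sqrt lam with hs
  have hs2 : s^2 = lam := Real.sq_sqrt hlam0
  have hsnn : 0 ≤ s := Real.sqrt_nonneg lam
  have hs1 : 1 ≤ s := by nlinarith
  have hs0 : 0 < s := by linarith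
  have hℓ1 : (1:ℝ) ≤ (ℓ:ℝ) := by exact_mod_cast hℓ
  have hgap : min lam (ℓ:ℝ) - Hber q ℓ
      = ∑ z : Fin n → Bool, berWeight q z * (min lam (ℓ:ℝ) - min ((count z:ℝ)) (ℓ:ℝ)) := by
    simp_rw [mul_sub]
    rw [Finset.sum_sub_distrib, ← Finset.sum_mul, h1, one_mul, Hber]
  by_cases hcase : lam ≤ 3 * (ℓ:ℝ)
  · -- small lam: use E|c - lam| ≤ √lam
    have hb : min lam (ℓ:ℝ) - Hber q ℓ ≤ s := by
      rw [hgap]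
      calc ∑ z : Fin n → Bool, berWeight q z * (min lam (ℓ:ℝ) - min ((count z:ℝ)) (ℓ:ℝ))
          ≤ ∑ z : Fin n → Bool, berWeight q z * |(count z:ℝ) - lam| := by
            apply Finset.sum_le_sum
            intro z _
            apply mul_le_mul_of_nonneg_left _ (hw z)
            rcases le_total ((count z:ℝ)) ((ℓ:ℝ)) with h|h
            · rw [min_eq_left h, abs_sub_comm]
              have h2 := le_abs_self (lam - (count z:ℝ))
              have h3 := min_le_left lam ((ℓ:ℝ))
              linarith
            · rw [min_eq_right h]
              have h2 := abs_nonneg ((count z:ℝ) - lam)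
              have h3 := min_le_right lam ((ℓ:ℝ))
              linarith
        _ ≤ s := expect_abs_le q hq lam hlam hlam0
    have hmin : lam ≤ 3 * min lam (ℓ:ℝ) := by
      rcases min_cases lam ((ℓ:ℝ)) with ⟨h, _⟩ | ⟨h, _⟩ <;> rw [h] <;> linarith
    calc min lam (ℓ:ℝ) - Hber q ℓ ≤ s := hb
      _ ≤ 3 / s * min lam (ℓ:ℝ) := by
          rw [div_mul_eq_mul_div, le_div_iff₀ hs0]
          nlinarith
  · -- large lam: Chebyshev
    push_neg at hcase
    have hl : (ℓ:ℝ) ≤ lam := by linarith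
    have hminr : min lam (ℓ:ℝ) = (ℓ:ℝ) := min_eq_right hl
    have hKpos : (0:ℝ) < (lam - ℓ)^2 := pow_pos (by linarith) 2
    have hpoint : ∀ z : Fin n → Bool,
        (lam - ℓ)^2 * (min lam (ℓ:ℝ) - min ((count z:ℝ)) (ℓ:ℝ))
          ≤ (ℓ:ℝ) * ((count z:ℝ) - lam)^2 := by
      intro z
      have hc0 : (0:ℝ) ≤ (count z:ℝ) := Nat.cast_nonneg _
      rw [hminr]
      rcases le_total ((count z:ℝ)) ((ℓ:ℝ)) with h|h
      · rw [min_eq_left h]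
        nlinarith [mul_nonneg (mul_nonneg (by linarith : (0:ℝ) ≤ (ℓ:ℝ))
            (sub_nonneg.2 h)) (by linarith : (0:ℝ) ≤ 2*lam - (count z:ℝ) - (ℓ:ℝ)),
          mul_nonneg hc0 hKpos.le]
      · rw [min_eq_right h]
        have : (0:ℝ) ≤ (ℓ:ℝ) * ((count z:ℝ) - lam)^2 := by positivity
        linarith
    have hsum : (lam - ℓ)^2 * (min lam (ℓ:ℝ) - Hber q ℓ) ≤ (ℓ:ℝ) * lam := by
      rw [hgap, Finset.mul_sum]
      calc ∑ z : Fin n → Bool,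
            (lam - ℓ)^2 * (berWeight q z * (min lam (ℓ:ℝ) - min ((count z:ℝ)) (ℓ:ℝ)))
          = ∑ z : Fin n → Bool,
            berWeight q z * ((lam - ℓ)^2 * (min lam (ℓ:ℝ) - min ((count z:ℝ)) (ℓ:ℝ))) := by
            exact Finset.sum_congr rfl fun z _ => by ring
        _ ≤ ∑ z : Fin n → Bool, berWeight q z * ((ℓ:ℝ) * ((count z:ℝ) - lam)^2) :=
            Finset.sum_le_sum fun z _ => mul_le_mul_of_nonneg_left (hpoint z) (hw z)
        _ = (ℓ:ℝ) * ∑ z : Fin n → Bool, berWeight q z * ((count z:ℝ) - lam)^2 := by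
            rw [Finset.mul_sum]
            exact Finset.sum_congr rfl fun z _ => by ring
        _ ≤ (ℓ:ℝ) * lam :=
            mul_le_mul_of_nonneg_left (expect_var_le q hq lam hlam) (by linarith)
    have h2 : min lam (ℓ:ℝ) - Hber q ℓ ≤ (ℓ:ℝ) * lam / (lam - ℓ)^2 := by
      rw [le_div_iff₀ hKpos]
      linarith
    calc min lam (ℓ:ℝ) - Hber q ℓ ≤ (ℓ:ℝ) * lam / (lam - ℓ)^2 := h2
      _ ≤ 3 / s * min lam (ℓ:ℝ) := by
          rw [hminr, div_mul_eq_mul_div, div_le_div_iff₀ hKpos hs0]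
          nlinarith [mul_nonneg (mul_nonneg (by linarith : (0:ℝ) ≤ (ℓ:ℝ))
              (by linarith : (0:ℝ) ≤ lam - 3*(ℓ:ℝ))) (by linarith : (0:ℝ) ≤ 5*lam - 3*(ℓ:ℝ)),
            mul_nonneg (mul_nonneg (by linarith : (0:ℝ) ≤ (ℓ:ℝ)) hlam0)
              (by nlinarith : (0:ℝ) ≤ lam - s),
            mul_nonneg (by linarith : (0:ℝ) ≤ (ℓ:ℝ)) (sq_nonneg lam)]
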